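/- For every integer n ≥ 1, the number of inversion sequences of length n avoiding both patterns 001 and 100 equals F_{n+2} − 1, where F_m is the m-th Fibonacci number, i.e. |I_n(001,100)| = F_{n+2} − 1. -/
import Mathlib

set_option maxHeartbeats 1000000


/-- An inversion sequence of length `n` (0-indexed): `e i ≤ i` for all `i`. -/
def InvSeq {n : ℕ} (e : Fin n → ℕ) : Prop := ∀ i : Fin n, e i ≤ (i : ℕ)

/-- `e` contains the pattern `p` (a word of nonnegative integers): there is a
strictly increasing choice of positions on which `e` is order-isomorphic to `p`. -/
def Contains {n : ℕ} (e : Fin n → ℕ) (p : List ℕ) : Prop :=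
  ∃ s : Fin p.length → Fin n, StrictMono s ∧
    ∀ a b : Fin p.length,
      (p.get a < p.get b ↔ e (s a) < e (s b)) ∧
      (p.get a = p.get b ↔ e (s a) = e (s b))

/-- `e` avoids the pattern `p`. -/
def Avoids {n : ℕ} (e : Fin n → ℕ) (p : List ℕ) : Prop := ¬ Contains e p

/-- The number of zero entries of `e`. -/
def zeroStat {n : ℕ} (e : Fin n → ℕ) : ℕ :=
  (Finset.univ.filter (fun i : Fin n => e i = 0)).card

/-- The number of distinct positive values among the entries of `e`. -/
def distStat {n : ℕ} (e : Fin n → ℕ) : ℕ :=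
  ((Finset.univ.image e).filter (fun v => 0 < v)).card

/-- The number of repeated entries of `e`: `n - dist e`. -/
def repStat {n : ℕ} (e : Fin n → ℕ) : ℕ := n - distStat e

/-- The number of saturated entries of `e` (1-indexed: `e_i = i - 1`). -/
def satuStat {n : ℕ} (e : Fin n → ℕ) : ℕ :=
  (Finset.univ.filter (fun i : Fin n => e i = (i : ℕ))).card


open Finset

section Pat
set_option linter.unnecessarySeqFocus false

lemma contains001 {n : ℕ} (e : Fin n → ℕ) {a b c : Fin n} (hab : a < b) (hbc : b < c)
    (h1 : e a = e b) (h2 : e b < e c) : Contains e [0,0,1] := by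
  refine ⟨![a,b,c], ?_, ?_⟩
  · intro i j hij
    fin_cases i <;> fin_cases j <;>
      simp_all [Matrix.cons_val_zero, Matrix.cons_val_one] <;> omega
  · intro i j
    fin_cases i <;> fin_cases j <;>
      simp_all [Matrix.cons_val_zero, Matrix.cons_val_one] <;> omega

lemma contains100 {n : ℕ} (e : Fin n → ℕ) {a b c : Fin n} (hab : a < b) (hbc : b < c)
    (h1 : e b < e a) (h2 : e b = e c) : Contains e [1,0,0] := by
  refine ⟨![a,b,c], ?_, ?_⟩
  · intro i j hij
    fin_cases i <;> fin_cases j <;>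
      simp_all [Matrix.cons_val_zero, Matrix.cons_val_one] <;> omega
  · intro i j
    fin_cases i <;> fin_cases j <;>
      simp_all [Matrix.cons_val_zero, Matrix.cons_val_one] <;> omega

lemma of_contains001 {n : ℕ} {e : Fin n → ℕ} (h : Contains e [0,0,1]) :
    ∃ a b c : Fin n, a < b ∧ b < c ∧ e a = e b ∧ e b < e c := by
  obtain ⟨s, hs, hrel⟩ := h
  refine ⟨s ⟨0, by decide⟩, s ⟨1, by decide⟩, s ⟨2, by decide⟩,
    hs (by decide), hs (by decide), ?_, ?_⟩
  · exact (hrel ⟨0, by decide⟩ ⟨1, by decide⟩).2.1 rfl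
  · exact (hrel ⟨1, by decide⟩ ⟨2, by decide⟩).1.1 (by decide)

lemma of_contains100 {n : ℕ} {e : Fin n → ℕ} (h : Contains e [1,0,0]) :
    ∃ a b c : Fin n, a < b ∧ b < c ∧ e b < e a ∧ e b = e c := by
  obtain ⟨s, hs, hrel⟩ := h
  refine ⟨s ⟨0, by decide⟩, s ⟨1, by decide⟩, s ⟨2, by decide⟩,
    hs (by decide), hs (by decide), ?_, ?_⟩
  · exact (hrel ⟨1, by decide⟩ ⟨0, by decide⟩).1.1 (by decide)
  · exact (hrel ⟨1, by decide⟩ ⟨2, by decide⟩).2.1 rfl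

end Pat

/-! ### Arithmetic -/

lemma diagSum (n : ℕ) : (∑ k ∈ range (n+1), Nat.choose k (n - k)) = Nat.fib (n+1) := by
  rw [Nat.fib_succ_eq_sum_choose, Finset.Nat.sum_antidiagonal_eq_sum_range_succ_mk]

lemma Asum (n : ℕ) :
    (∑ k ∈ range n, ∑ m ∈ range (n - k), Nat.choose k m) = Nat.fib (n+2) - 1 := by
  induction n with
  | zero => simp
  | succ n ih =>
    rw [Finset.sum_range_succ]
    have h1 : ∀ k ∈ range n, (∑ m ∈ range (n + 1 - k), Nat.choose k m)
        = (∑ m ∈ range (n - k), Nat.choose k m) + Nat.choose k (n - k) := by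
      intro k hk
      have : n + 1 - k = (n - k) + 1 := by
        have := mem_range.1 hk; omega
      rw [this, Finset.sum_range_succ]
    rw [Finset.sum_congr rfl h1, Finset.sum_add_distrib, ih]
    have h2 : (∑ m ∈ range (n + 1 - n), Nat.choose n m) = Nat.choose n (n - n) := by
      simp
    rw [h2]
    have h3 : (∑ k ∈ range n, Nat.choose k (n - k)) + Nat.choose n (n - n)
        = Nat.fib (n+1) := by
      rw [← Finset.sum_range_succ, diagSum]
    have h4 : 1 ≤ Nat.fib (n+2) := Nat.fib_pos.2 (by omega)
    have h5 : Nat.fib (n+1+2) = Nat.fib (n+1) + Nat.fib (n+2) := by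
      rw [Nat.fib_add_two]
    omega

/-! ### The parametrization -/

def ParamFinset (n : ℕ) : Finset ((_ : ℕ) × Finset ℕ) :=
  (range n).sigma (fun k => (range k).powerset.filter (fun D => D.card ≤ n - 1 - k))

def Fmap (n k : ℕ) (D : Finset ℕ) : Fin n → ℕ := fun i =>
  if (i : ℕ) ≤ k then (i : ℕ)
  else if h : n - 1 - (i : ℕ) < D.card then D.orderEmbOfFin rfl ⟨n - 1 - (i : ℕ), h⟩
  else k

lemma mem_ParamFinset {n k : ℕ} {D : Finset ℕ} :
    (⟨k, D⟩ : (_ : ℕ) × Finset ℕ) ∈ ParamFinset n ↔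
      k < n ∧ D ⊆ range k ∧ D.card ≤ n - 1 - k := by
  simp [ParamFinset, and_assoc]

section Fmapfacts

variable {n k : ℕ} {D : Finset ℕ} (hk : k < n) (hD : D ⊆ range k) (hm : D.card ≤ n - 1 - k)

lemma Fmap_of_le {i : Fin n} (h : (i : ℕ) ≤ k) : Fmap n k D i = i := by
  simp [Fmap, h]

include hD in
lemma Fmap_le (i : Fin n) : Fmap n k D i ≤ k := by
  unfold Fmap
  split_ifs with h1 h2
  · exact h1
  · have := hD (Finset.orderEmbOfFin_mem D rfl ⟨n - 1 - (i : ℕ), h2⟩)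
    exact le_of_lt (mem_range.1 this)
  · exact le_rfl

include hD hm in
lemma Fmap_tail_lt {s t : Fin n} (h1 : ¬ (s : ℕ) ≤ k) (h2 : n - 1 - (s : ℕ) < D.card)
    (hst : s < t) : Fmap n k D t < Fmap n k D s := by
  have hs1 : (s : ℕ) < n := s.isLt
  have ht1 : (t : ℕ) < n := t.isLt
  have hst' : (s : ℕ) < (t : ℕ) := hst
  have h3 : n - 1 - (t : ℕ) < n - 1 - (s : ℕ) := by omega
  have h4 : n - 1 - (t : ℕ) < D.card := lt_trans h3 h2
  have h5 : ¬ (t : ℕ) ≤ k := by omega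
  show Fmap n k D t < Fmap n k D s
  unfold Fmap
  rw [if_neg h5, if_neg h1, dif_pos h4, dif_pos h2]
  exact (D.orderEmbOfFin rfl).strictMono (show (⟨n-1-(t:ℕ),h4⟩ : Fin D.card) < ⟨n-1-(s:ℕ),h2⟩ from h3)

include hD hm in
lemma Fmap_weak_dec {s t : Fin n} (hks : k ≤ (s : ℕ)) (hst : s < t) :
    Fmap n k D t ≤ Fmap n k D s := by
  by_cases h1 : (s : ℕ) ≤ k
  · have : Fmap n k D s = (s : ℕ) := Fmap_of_le h1
    rw [this]
    have := Fmap_le hD (k := k) t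
    omega
  · by_cases h2 : n - 1 - (s : ℕ) < D.card
    · exact le_of_lt (Fmap_tail_lt hD hm h1 h2 hst)
    · have hs : Fmap n k D s = k := by simp [Fmap, h1, h2]
      rw [hs]
      exact Fmap_le hD t

include hD hm in
lemma Fmap_strict_dec {s t : Fin n} (hks : ¬ (s : ℕ) ≤ k) (hst : s < t)
    (hv : Fmap n k D s < k) : Fmap n k D t < Fmap n k D s := by
  by_cases h2 : n - 1 - (s : ℕ) < D.card
  · exact Fmap_tail_lt hD hm hks h2 hst
  · exfalso
    have hs : Fmap n k D s = k := by simp [Fmap, hks, h2]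
    omega

include hD in
lemma Fmap_invseq : InvSeq (Fmap n k D) := by
  intro i
  unfold Fmap
  split_ifs with h1 h2
  · exact le_rfl
  · have := hD (Finset.orderEmbOfFin_mem D rfl ⟨n - 1 - (i : ℕ), h2⟩)
    have := mem_range.1 this
    omega
  · omega

include hD hm in
lemma Fmap_avoids001 : Avoids (Fmap n k D) [0,0,1] := by
  intro hcon
  obtain ⟨a, b, c, hab, hbc, h1, h2⟩ := of_contains001 hcon
  by_cases hb : (b : ℕ) < k
  · have hFb : Fmap n k D b = (b : ℕ) := Fmap_of_le (le_of_lt hb)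
    have hFa : Fmap n k D a = (a : ℕ) := Fmap_of_le (by have : (a:ℕ) < (b:ℕ) := hab; omega)
    have : (a : ℕ) < (b : ℕ) := hab
    omega
  · have := Fmap_weak_dec hD hm (s := b) (t := c) (by omega) hbc
    omega

include hD hm in
lemma Fmap_avoids100 : Avoids (Fmap n k D) [1,0,0] := by
  intro hcon
  obtain ⟨a, b, c, hab, hbc, h1, h2⟩ := of_contains100 hcon
  have hFa := Fmap_le hD (k := k) a
  have hFbk : Fmap n k D b < k := by omega
  by_cases hb : (b : ℕ) ≤ k
  · have hFb : Fmap n k D b = (b : ℕ) := Fmap_of_le hb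
    have hFa' : Fmap n k D a = (a : ℕ) := Fmap_of_le (by have : (a:ℕ) < (b:ℕ) := hab; omega)
    have : (a : ℕ) < (b : ℕ) := hab
    omega
  · have := Fmap_strict_dec hD hm hb hbc hFbk
    omega

end Fmapfacts

/-! ### Injectivity -/

lemma Fmap_k_le {n k1 k2 : ℕ} {D1 D2 : Finset ℕ} (hk2 : k2 < n) (hD1 : D1 ⊆ range k1)
    (heq : Fmap n k1 D1 = Fmap n k2 D2) : k2 ≤ k1 := by
  have h1 : Fmap n k2 D2 ⟨k2, hk2⟩ = k2 := Fmap_of_le le_rfl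
  have h2 : Fmap n k1 D1 ⟨k2, hk2⟩ ≤ k1 := Fmap_le hD1 _
  rw [heq, h1] at h2
  exact h2

lemma Fmap_D_subset {n k : ℕ} {D1 D2 : Finset ℕ} (hk : k < n) (hD1 : D1 ⊆ range k)
    (hm1 : D1.card ≤ n - 1 - k) (heq : Fmap n k D1 = Fmap n k D2) : D1 ⊆ D2 := by
  intro v hv
  have hvr : v ∈ Set.range (D1.orderEmbOfFin rfl) := by
    rw [Finset.range_orderEmbOfFin]; exact hv
  obtain ⟨r, hr⟩ := hvr
  have hr1 : (r : ℕ) < D1.card := r.isLt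
  have hi0 : n - 1 - (r : ℕ) < n := by omega
  set i : Fin n := ⟨n - 1 - (r : ℕ), hi0⟩ with hidef
  have hiv : (i : ℕ) = n - 1 - (r : ℕ) := rfl
  have hik : ¬ (i : ℕ) ≤ k := by rw [hiv]; omega
  have hr2 : n - 1 - (i : ℕ) = (r : ℕ) := by rw [hiv]; omega
  have e1 : Fmap n k D1 i = v := by
    have key : ∀ (h : n - 1 - (i : ℕ) < D1.card),
        D1.orderEmbOfFin rfl ⟨n - 1 - (i : ℕ), h⟩ = v := by
      intro h
      rw [show (⟨n - 1 - (i : ℕ), h⟩ : Fin D1.card) = r from Fin.ext hr2]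
      exact hr
    unfold Fmap
    rw [if_neg hik, dif_pos (by rw [hr2]; exact hr1)]
    exact key _
  have e2 : Fmap n k D2 i = v := by rw [← heq]; exact e1
  have hvk : v < k := mem_range.1 (hD1 hv)
  unfold Fmap at e2
  rw [if_neg hik] at e2
  by_cases h2 : n - 1 - (i : ℕ) < D2.card
  · rw [dif_pos h2] at e2
    rw [← e2]
    exact Finset.orderEmbOfFin_mem D2 rfl _
  · rw [dif_neg h2] at e2
    omega

/-! ### Surjectivity -/

lemma exists_param {n : ℕ} (hn : 1 ≤ n) (e : Fin n → ℕ) (hinv : InvSeq e)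
    (h001 : Avoids e [0,0,1]) (h100 : Avoids e [1,0,0]) :
    ∃ k D, k < n ∧ D ⊆ range k ∧ D.card ≤ n - 1 - k ∧ Fmap n k D = e := by
  classical
  set k := Nat.findGreatest (fun t => ∃ h : t < n, e ⟨t, h⟩ = t) (n - 1) with hkdef
  have hP0 : ∃ h : (0:ℕ) < n, e ⟨0, h⟩ = 0 :=
    ⟨by omega, Nat.le_zero.1 (hinv ⟨0, by omega⟩)⟩
  have hkP : ∃ h : k < n, e ⟨k, h⟩ = k := by
    rw [hkdef]
    exact Nat.findGreatest_spec (P := fun t => ∃ h : t < n, e ⟨t, h⟩ = t) (Nat.zero_le _) hP0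
  have hkn : k ≤ n - 1 := by rw [hkdef]; exact Nat.findGreatest_le _
  obtain ⟨hk_lt, hek⟩ := hkP
  have hmax : ∀ t : Fin n, k < (t : ℕ) → e t ≠ (t : ℕ) := by
    intro t ht hc
    rw [hkdef] at ht
    have hng : ¬ ∃ h : (t : ℕ) < n, e ⟨(t : ℕ), h⟩ = (t : ℕ) :=
      Nat.findGreatest_is_greatest ht (by have := t.isLt; omega)
    exact hng ⟨t.isLt, hc⟩
  have L0 : ∀ s t : Fin n, s < t → e t = (t : ℕ) → e s = (s : ℕ) := by
    intro s t hst het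
    by_contra hes
    have hes' : e s < (s : ℕ) := lt_of_le_of_ne (hinv s) hes
    have hmaps : ∀ i ∈ Iic s, e i ∈ range (s : ℕ) := by
      intro i hi
      have hi0 : i ≤ s := mem_Iic.1 hi
      have hi' : (i : ℕ) ≤ (s : ℕ) := hi0
      have hinvi := hinv i
      rcases eq_or_lt_of_le hi' with h | h
      · have hieq : i = s := Fin.ext h
        subst hieq
        exact mem_range.2 hes'
      · exact mem_range.2 (by omega)
    have hcard : (range (s : ℕ)).card < (Iic s).card := by
      rw [card_range, Fin.card_Iic]; omega
    obtain ⟨a, ha, b, hb, hab, heab⟩ :=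
      Finset.exists_ne_map_eq_of_card_lt_of_maps_to hcard hmaps
    have hebs : e b < (s : ℕ) := mem_range.1 (hmaps b hb)
    have heas : e a < (s : ℕ) := mem_range.1 (hmaps a ha)
    have hst' : (s : ℕ) < (t : ℕ) := hst
    rcases lt_or_gt_of_ne hab with h | h
    · exact h001 (contains001 e h (lt_of_le_of_lt (show b ≤ s from mem_Iic.1 hb) hst) heab
        (by omega))
    · exact h001 (contains001 e h
        (lt_of_le_of_lt (show a ≤ s from mem_Iic.1 ha) hst) heab.symm (by omega))
  have L1 : ∀ t : Fin n, (t : ℕ) ≤ k → e t = (t : ℕ) := by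
    intro t ht
    rcases eq_or_lt_of_le ht with h | h
    · have hteq : t = (⟨k, hk_lt⟩ : Fin n) := Fin.ext h
      rw [hteq]; exact hek
    · exact L0 t ⟨k, hk_lt⟩ (show (t : ℕ) < k from h) hek
  have L2 : ∀ t : Fin n, e t ≤ k := by
    intro t
    by_contra hgt
    push_neg at hgt
    have hkt : k < (t : ℕ) := lt_of_lt_of_le hgt (hinv t)
    have het : e t < (t : ℕ) := lt_of_le_of_ne (hinv t) (hmax t hkt)
    have hu : k + 1 < n := by have := t.isLt; omega
    set u : Fin n := ⟨k + 1, hu⟩ with hudef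
    have huv : (u : ℕ) = k + 1 := rfl
    have hvu : e u ≤ k := by
      have h1 := hinv u
      have h2 : e u ≠ (u : ℕ) := hmax u (by rw [huv]; omega)
      rw [huv] at h1 h2
      omega
    set vf : Fin n := ⟨e u, by omega⟩ with hvfdef
    have hvfv : (vf : ℕ) = e u := rfl
    have hevf : e vf = e u := by
      have := L1 vf (by rw [hvfv]; exact hvu)
      rw [hvfv] at this; exact this
    apply h001
    refine contains001 e (a := vf) (b := u) (c := t) ?_ ?_ hevf (by omega)
    · show vf < u
      show (vf : ℕ) < (u : ℕ)
      rw [hvfv, huv]; omega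
    · show u < t
      show (u : ℕ) < (t : ℕ)
      rw [huv]; omega
  have L3 : ∀ s t : Fin n, k ≤ (s : ℕ) → s < t → e t ≤ e s := by
    intro s t hks hst
    by_contra h
    push_neg at h
    rcases eq_or_lt_of_le hks with hsk | hsk
    · have h1 : e s = k := by rw [L1 s hsk.symm.le, ← hsk]
      have := L2 t; omega
    · have hvk : e s < k := by have := L2 t; omega
      set vf : Fin n := ⟨e s, by omega⟩ with hvfdef
      have hvfv : (vf : ℕ) = e s := rfl
      have hevf : e vf = e s := by
        have := L1 vf (by rw [hvfv]; omega)
        rw [hvfv] at this; exact this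
      refine h001 (contains001 e (a := vf) (b := s) (c := t) ?_ hst hevf h)
      show (vf : ℕ) < (s : ℕ)
      rw [hvfv]; omega
  have L4 : ∀ s t : Fin n, k < (s : ℕ) → s < t → e s = e t → e s = k := by
    intro s t hks hst hest
    by_contra hne
    have hlt : e s < k := lt_of_le_of_ne (L2 s) hne
    refine h100 (contains100 e (a := (⟨k, hk_lt⟩ : Fin n)) (b := s) (c := t) ?_ hst ?_ hest)
    · show ((⟨k, hk_lt⟩ : Fin n) : ℕ) < (s : ℕ); exact hks
    · rw [hek]; exact hlt
  have L5 : ∀ s t : Fin n, k < (s : ℕ) → s < t → e t = k → e s = k := by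
    intro s t hks hst het
    by_contra hne
    have hlt : e s < k := lt_of_le_of_ne (L2 s) hne
    set vf : Fin n := ⟨e s, by omega⟩ with hvfdef
    have hvfv : (vf : ℕ) = e s := rfl
    have hevf : e vf = e s := by
      have := L1 vf (by rw [hvfv]; omega)
      rw [hvfv] at this; exact this
    refine h001 (contains001 e (a := vf) (b := s) (c := t) ?_ hst hevf (by omega))
    show (vf : ℕ) < (s : ℕ)
    rw [hvfv]; omega
  set T : Finset (Fin n) := univ.filter (fun i => k < (i : ℕ) ∧ e i ≠ k) with hTdef
  have hTmem : ∀ i : Fin n, i ∈ T ↔ (k < (i : ℕ) ∧ e i ≠ k) := by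
    intro i; simp [hTdef]
  have hinje : Set.InjOn e T := by
    intro a ha b hb heq
    by_contra hne
    have hne' : a ≠ b := fun h => hne h
    rcases lt_or_gt_of_ne hne' with h | h
    · exact ((hTmem a).1 (by exact_mod_cast ha)).2
        (L4 a b ((hTmem a).1 (by exact_mod_cast ha)).1 h heq)
    · exact ((hTmem b).1 (by exact_mod_cast hb)).2
        (L4 b a ((hTmem b).1 (by exact_mod_cast hb)).1 h heq.symm)
  set D := T.image e with hDdef
  have hmD : D.card = T.card := Finset.card_image_of_injOn hinje
  have hDk : D ⊆ range k := by
    intro v hv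
    obtain ⟨i, hi, rfl⟩ := mem_image.1 hv
    exact mem_range.2 (lt_of_le_of_ne (L2 i) ((hTmem i).1 hi).2)
  have hup : ∀ i i' : Fin n, i ∈ T → i ≤ i' → i' ∈ T := by
    intro i i' hi hle
    obtain ⟨h1, h2⟩ := (hTmem i).1 hi
    rcases eq_or_lt_of_le hle with h | h
    · rwa [← h]
    · have h' : (i : ℕ) < (i' : ℕ) := h
      refine (hTmem i').2 ⟨by omega, fun hc => h2 (L5 i i' h1 h hc)⟩
  have hm_le : T.card ≤ n - 1 - k := by
    have hsub : T ⊆ Ioi (⟨k, hk_lt⟩ : Fin n) := by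
      intro i hi
      exact mem_Ioi.2 (show ((⟨k, hk_lt⟩ : Fin n) : ℕ) < (i : ℕ) from ((hTmem i).1 hi).1)
    calc T.card ≤ (Ioi (⟨k, hk_lt⟩ : Fin n)).card := Finset.card_le_card hsub
      _ = n - 1 - k := Fin.card_Ioi _
  have hmem_iff : ∀ i : Fin n, i ∈ T ↔ n - 1 - (i : ℕ) < T.card := by
    intro i
    constructor
    · intro hi
      have hsub : Ici i ⊆ T := fun i' hi' => hup i i' hi (mem_Ici.1 hi')
      have h1 : n - (i : ℕ) ≤ T.card := by
        calc n - (i : ℕ) = (Ici i).card := (Fin.card_Ici i).symm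
          _ ≤ T.card := Finset.card_le_card hsub
      have := i.isLt; omega
    · intro hlt
      by_contra hni
      have hbound : T.card ≤ n - 1 - (i : ℕ) := by
        by_cases hik : k < (i : ℕ)
        · have hsub : T ⊆ Ioi i := by
            intro t' ht'
            refine mem_Ioi.2 ?_
            by_contra hle
            push_neg at hle
            exact hni (hup t' i ht' hle)
          calc T.card ≤ (Ioi i).card := Finset.card_le_card hsub
            _ = n - 1 - (i : ℕ) := Fin.card_Ioi i
        · push_neg at hik
          omega
      omega
  have hcardD : D.card ≤ n - 1 - k := by rw [hmD]; exact hm_le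
  refine ⟨k, D, hk_lt, hDk, hcardD, ?_⟩
  have hpos0 : ∀ r : ℕ, r < D.card → n - 1 - r < n := by intro r hr; omega
  set g : Fin D.card → ℕ := fun r => e ⟨n - 1 - (r : ℕ), hpos0 _ r.isLt⟩ with hgdef
  have hposmem : ∀ r : Fin D.card, (⟨n - 1 - (r : ℕ), hpos0 _ r.isLt⟩ : Fin n) ∈ T := by
    intro r
    apply (hmem_iff _).2
    rw [← hmD]
    have h1 : (r : ℕ) < D.card := r.isLt
    show n - 1 - (n - 1 - (r : ℕ)) < D.card
    omega
  have hgmem : ∀ r, g r ∈ D := fun r => mem_image.2 ⟨_, hposmem r, rfl⟩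
  have hgmono : StrictMono g := by
    intro r r' hrr
    have h1 : (r : ℕ) < (r' : ℕ) := hrr
    have h2 : (r' : ℕ) < D.card := r'.isLt
    have hp : n - 1 - (r' : ℕ) < n - 1 - (r : ℕ) := by omega
    have ht1 := hposmem r
    have ht2 := hposmem r'
    have hk1 : k < n - 1 - (r' : ℕ) := ((hTmem _).1 ht2).1
    have hd : e ⟨n - 1 - (r : ℕ), hpos0 _ r.isLt⟩ ≤ e ⟨n - 1 - (r' : ℕ), hpos0 _ r'.isLt⟩ :=
      L3 _ _ (le_of_lt hk1) hp
    rcases lt_or_eq_of_le hd with h | h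
    · exact h
    · exfalso
      have := L4 _ _ hk1 hp h.symm
      exact ((hTmem _).1 ht1).2 (by rw [← h] at this; exact this)
  have hgE : g = ⇑(D.orderEmbOfFin rfl) := Finset.orderEmbOfFin_unique rfl hgmem hgmono
  funext i
  unfold Fmap
  split_ifs with h1 h2
  · exact (L1 i h1).symm
  · have hiT : i ∈ T := (hmem_iff i).2 (by rw [← hmD]; exact h2)
    have : D.orderEmbOfFin rfl ⟨n - 1 - (i : ℕ), h2⟩ = g ⟨n - 1 - (i : ℕ), h2⟩ := by
      rw [hgE]
    rw [this, hgdef]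
    show e _ = e i
    congr 1
    apply Fin.ext
    show n - 1 - (n - 1 - (i : ℕ)) = (i : ℕ)
    have := i.isLt
    omega
  · have hni : i ∉ T := fun hi => h2 (by rw [hmD]; exact (hmem_iff i).1 hi)
    have := (hTmem i)
    push_neg at h1
    by_contra hne
    exact hni ((hTmem i).2 ⟨h1, fun hc => hne hc.symm⟩)

/-! ### Counting the parameter set -/

lemma card_filter_powerset (k c : ℕ) :
    ((range k).powerset.filter (fun D => D.card ≤ c)).card
      = ∑ m ∈ range (c + 1), Nat.choose k m := by
  have hpart : (range k).powerset.filter (fun D => D.card ≤ c)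
      = (range (c + 1)).biUnion (fun m => Finset.powersetCard m (range k)) := by
    ext t
    simp only [mem_filter, mem_powerset, mem_biUnion, mem_range, Finset.mem_powersetCard]
    constructor
    · rintro ⟨h1, h2⟩
      exact ⟨t.card, by omega, h1, rfl⟩
    · rintro ⟨m, hm, h1, h2⟩
      exact ⟨h1, by omega⟩
  rw [hpart, Finset.card_biUnion]
  · apply Finset.sum_congr rfl
    intro m _
    rw [Finset.card_powersetCard, card_range]
  · intro x _ y _ hxy
    apply Finset.disjoint_left.2
    intro t ht ht'
    rw [Finset.mem_powersetCard] at ht ht'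
    exact hxy (by rw [← ht.2, ← ht'.2])

lemma card_ParamFinset (n : ℕ) : (ParamFinset n).card = Nat.fib (n + 2) - 1 := by
  rw [ParamFinset, Finset.card_sigma]
  rw [← Asum n]
  apply Finset.sum_congr rfl
  intro k hk
  rw [card_filter_powerset]
  have : n - 1 - k + 1 = n - k := by have := mem_range.1 hk; omega
  rw [this]

/-! ### Main theorem -/

theorem stmt_19' (n : ℕ) (hn : 1 ≤ n) :
    Nat.card {e : Fin n → ℕ // InvSeq e ∧ Avoids e [0,0,1] ∧ Avoids e [1,0,0]}
      = Nat.fib (n + 2) - 1 := by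
  classical
  have hbij : Set.BijOn (fun p : (_ : ℕ) × Finset ℕ => Fmap n p.1 p.2)
      ↑(ParamFinset n)
      {e : Fin n → ℕ | InvSeq e ∧ Avoids e [0,0,1] ∧ Avoids e [1,0,0]} := by
    refine ⟨?_, ?_, ?_⟩
    · rintro ⟨k, D⟩ hp
      rw [Finset.mem_coe, mem_ParamFinset] at hp
      obtain ⟨hk, hD, hm⟩ := hp
      exact ⟨Fmap_invseq hD, Fmap_avoids001 hD hm, Fmap_avoids100 hD hm⟩
    · rintro ⟨k1, D1⟩ hp1 ⟨k2, D2⟩ hp2 heq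
      rw [Finset.mem_coe, mem_ParamFinset] at hp1 hp2
      obtain ⟨hk1, hD1, hm1⟩ := hp1
      obtain ⟨hk2, hD2, hm2⟩ := hp2
      simp only at heq
      have hkk : k1 = k2 :=
        le_antisymm (Fmap_k_le hk1 hD2 heq.symm) (Fmap_k_le hk2 hD1 heq)
      subst hkk
      have hDD : D1 = D2 :=
        Finset.Subset.antisymm (Fmap_D_subset hk1 hD1 hm1 heq)
          (Fmap_D_subset hk1 hD2 hm2 heq.symm)
      rw [hDD]
    · rintro e ⟨hinv, h001, h100⟩
      obtain ⟨k, D, hk, hD, hm, heq⟩ := exists_param hn e hinv h001 h100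
      exact ⟨⟨k, D⟩, by rw [Finset.mem_coe, mem_ParamFinset]; exact ⟨hk, hD, hm⟩, heq⟩
  have hequiv := hbij.equiv _
  have h1 : Nat.card {e : Fin n → ℕ // InvSeq e ∧ Avoids e [0,0,1] ∧ Avoids e [1,0,0]}
      = Nat.card ↑(ParamFinset n : Set ((_ : ℕ) × Finset ℕ)) := by
    refine Nat.card_congr ?_
    exact (Equiv.subtypeEquivRight (fun e => by simp [Set.mem_setOf_eq])).trans hequiv.symm
  rw [h1, Nat.card_coe_set_eq, Set.ncard_coe_finset, card_ParamFinset]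

theorem stmt_19 (n : ℕ) (hn : 1 ≤ n) :
    Nat.card {e : Fin n → ℕ // InvSeq e ∧ Avoids e [0,0,1] ∧ Avoids e [1,0,0]}
      = Nat.fib (n + 2) - 1 := by
  exact stmt_19' n hn
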